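/- Let m1, m2, n be pairwise relatively prime positive integers with gcd(n,m1) = gcd(n,m2) = 1, let K be a positive integer with n ≤ m2·K, let p be a prime with m1·p < n, and let q be a prime that divides neither m1 nor m2. For each prime r dividing m2 write α_r for the r-adic valuation of m2. Then n = m1·p + m2·q if and only if the following three conditions all hold: (b) for every prime r dividing m2 there exists an integer j with 1 ≤ j ≤ r−1 such that, in ZMod (r^(α_r+1)), (p) = (n)·(m1)⁻¹ + j·(r^(α_r)); (c) there exists an integer ℓ with 1 ≤ ℓ ≤ q−1 such that, in ZMod (q^2), (p) = (n)·(m1)⁻¹ + ℓ·(q); (d) for every prime s < K with s ≠ q, s not dividing m1 and s not dividing m2, there exists an integer j with 1 ≤ j ≤ s−1 such that, in ZMod s, (p) = (n)·(m1)⁻¹ + j. -/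
import Mathlib

private lemma aux_key (t m1 p n N c : ℕ) [NeZero t] (hco : Nat.Coprime m1 t)
    (hN : m1 * p + N = n) :
    ((p : ZMod t) = (n : ZMod t) * (m1 : ZMod t)⁻¹ + (c : ZMod t)) ↔ t ∣ N + m1 * c := by
  have hu : IsUnit (m1 : ZMod t) := (ZMod.isUnit_iff_coprime m1 t).mpr hco
  have h1 : (m1 : ZMod t) * (m1 : ZMod t)⁻¹ = 1 := ZMod.mul_inv_of_unit _ hu
  have hstep : ((p : ZMod t) = (n : ZMod t) * (m1 : ZMod t)⁻¹ + (c : ZMod t)) ↔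
      ((m1 * p : ℕ) : ZMod t) = ((n + m1 * c : ℕ) : ZMod t) := by
    push_cast
    constructor
    · intro h
      linear_combination (m1 : ZMod t) * h + (n : ZMod t) * h1
    · intro h
      linear_combination (m1 : ZMod t)⁻¹ * h + ((c : ZMod t) - p) * h1
  rw [hstep, ZMod.natCast_eq_natCast_iff, Nat.modEq_iff_dvd' (by omega)]
  have : n + m1 * c - m1 * p = N + m1 * c := by omega
  rw [this]

private lemma aux_pick (r a m1 : ℕ) (hr : r.Prime) (ha : ¬ r ∣ a) (hm1 : ¬ r ∣ m1) :
    ∃ j : ℕ, 1 ≤ j ∧ j ≤ r - 1 ∧ r ∣ a + m1 * j := by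
  haveI := Fact.mk hr
  have hane : (a : ZMod r) ≠ 0 := by
    rwa [Ne, ZMod.natCast_eq_zero_iff]
  have hm1ne : (m1 : ZMod r) ≠ 0 := by
    rwa [Ne, ZMod.natCast_eq_zero_iff]
  have hxne : -(a : ZMod r) * (m1 : ZMod r)⁻¹ ≠ 0 :=
    mul_ne_zero (neg_ne_zero.mpr hane) (inv_ne_zero hm1ne)
  refine ⟨(-(a : ZMod r) * (m1 : ZMod r)⁻¹).val, ?_, ?_, ?_⟩
  · have := (ZMod.val_eq_zero _).not.mpr hxne
    omega
  · have := ZMod.val_lt (-(a : ZMod r) * (m1 : ZMod r)⁻¹)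
    omega
  · rw [← ZMod.natCast_eq_zero_iff]
    push_cast
    rw [ZMod.natCast_val, ZMod.cast_id]
    linear_combination (-(a : ZMod r)) * mul_inv_cancel₀ hm1ne

theorem stmt_1 (m1 m2 n K : ℕ) (hm1 : 0 < m1) (hm2 : 0 < m2) (hn : 0 < n) (hK : 0 < K)
    (h12 : Nat.gcd m1 m2 = 1) (hn1 : Nat.gcd n m1 = 1) (hn2 : Nat.gcd n m2 = 1)
    (hnK : n ≤ m2 * K) (p q : ℕ) (hp : p.Prime) (hq : q.Prime)
    (hqm1 : ¬ q ∣ m1) (hqm2 : ¬ q ∣ m2) (hpn : m1 * p < n) :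
    n = m1 * p + m2 * q ↔
      ((∀ r : ℕ, r.Prime → r ∣ m2 →
          ∃ j : ℕ, 1 ≤ j ∧ j ≤ r - 1 ∧
            (p : ZMod (r ^ (m2.factorization r + 1))) =
              (n : ZMod (r ^ (m2.factorization r + 1))) *
                  (m1 : ZMod (r ^ (m2.factorization r + 1)))⁻¹ +
                (j : ZMod (r ^ (m2.factorization r + 1))) *
                  (r : ZMod (r ^ (m2.factorization r + 1))) ^ (m2.factorization r)) ∧
        (∃ l : ℕ, 1 ≤ l ∧ l ≤ q - 1 ∧
          (p : ZMod (q ^ 2)) =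
            (n : ZMod (q ^ 2)) * (m1 : ZMod (q ^ 2))⁻¹ +
              (l : ZMod (q ^ 2)) * (q : ZMod (q ^ 2))) ∧
        (∀ s : ℕ, s.Prime → s < K → s ≠ q → ¬ s ∣ m1 → ¬ s ∣ m2 →
          ∃ j : ℕ, 1 ≤ j ∧ j ≤ s - 1 ∧
            (p : ZMod s) = (n : ZMod s) * (m1 : ZMod s)⁻¹ + (j : ZMod s))) := by
  obtain ⟨N, hN⟩ : ∃ N, m1 * p + N = n := ⟨n - m1 * p, by omega⟩
  have hN0 : 0 < N := by omega
  haveI : NeZero (q ^ 2) := ⟨pow_ne_zero _ hq.pos.ne'⟩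
  have hcoq : Nat.Coprime m1 (q ^ 2) :=
    ((hq.coprime_iff_not_dvd).mpr hqm1).symm.pow_right 2
  constructor
  · -- forward direction
    intro h
    have hNval : N = m2 * q := by omega
    refine ⟨?_, ?_, ?_⟩
    · -- condition (b)
      intro r hr hrm2
      haveI : NeZero (r ^ (m2.factorization r + 1)) := ⟨pow_ne_zero _ hr.pos.ne'⟩
      have hrm1 : ¬ r ∣ m1 := by
        intro hd
        have : r ∣ 1 := h12 ▸ Nat.dvd_gcd hd hrm2
        exact hr.one_lt.ne' (Nat.dvd_one.mp this)
      have hco : Nat.Coprime m1 (r ^ (m2.factorization r + 1)) :=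
        ((hr.coprime_iff_not_dvd).mpr hrm1).symm.pow_right _
      have hrq : ¬ r ∣ q := by
        intro hd
        exact hqm2 (((Nat.prime_dvd_prime_iff_eq hr hq).mp hd) ▸ hrm2)
      obtain ⟨m2', hself, hm2'nd⟩ :
          ∃ m2', r ^ m2.factorization r * m2' = m2 ∧ ¬ r ∣ m2' :=
        ⟨m2 / r ^ m2.factorization r, Nat.ordProj_mul_ordCompl_eq_self m2 r,
          Nat.not_dvd_ordCompl hr hm2.ne'⟩
      have ha : ¬ r ∣ m2' * q := by
        intro hd
        rcases (hr.dvd_mul).mp hd with h' | h'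
        · exact hm2'nd h'
        · exact hrq h'
      obtain ⟨j, hj1, hj2, hjd⟩ := aux_pick r (m2' * q) m1 hr ha hrm1
      refine ⟨j, hj1, hj2, ?_⟩
      have hcast : ((j * r ^ m2.factorization r : ℕ) : ZMod (r ^ (m2.factorization r + 1))) =
          (j : ZMod (r ^ (m2.factorization r + 1))) *
            (r : ZMod (r ^ (m2.factorization r + 1))) ^ (m2.factorization r) := by
        push_cast; ring
      rw [← hcast]
      refine (aux_key _ m1 p n N _ hco hN).mpr ?_
      have hsplit : N + m1 * (j * r ^ m2.factorization r) =
          r ^ m2.factorization r * (m2' * q + m1 * j) := by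
        rw [hNval, show r ^ m2.factorization r * (m2' * q + m1 * j) =
          r ^ m2.factorization r * m2' * q + m1 * (j * r ^ m2.factorization r) from by ring,
          hself]
      rw [hsplit, pow_succ]
      exact Nat.mul_dvd_mul_left _ hjd
    · -- condition (c)
      have ha : ¬ q ∣ m2 := hqm2
      obtain ⟨l, hl1, hl2, hld⟩ := aux_pick q m2 m1 hq ha hqm1
      refine ⟨l, hl1, hl2, ?_⟩
      have hcast : ((l * q : ℕ) : ZMod (q ^ 2)) =
          (l : ZMod (q ^ 2)) * (q : ZMod (q ^ 2)) := by push_cast; ring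
      rw [← hcast]
      refine (aux_key _ m1 p n N _ hcoq hN).mpr ?_
      have hsplit : N + m1 * (l * q) = q * (m2 + m1 * l) := by rw [hNval]; ring
      rw [hsplit, pow_two]
      exact Nat.mul_dvd_mul_left _ hld
    · -- condition (d)
      intro s hs hsK hsq hsm1 hsm2
      haveI : NeZero s := ⟨hs.pos.ne'⟩
      have hsqd : ¬ s ∣ q := by
        intro hd
        exact hsq ((Nat.prime_dvd_prime_iff_eq hs hq).mp hd)
      have ha : ¬ s ∣ m2 * q := by
        intro hd
        rcases (hs.dvd_mul).mp hd with h' | h'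
        · exact hsm2 h'
        · exact hsqd h'
      obtain ⟨j, hj1, hj2, hjd⟩ := aux_pick s (m2 * q) m1 hs ha hsm1
      refine ⟨j, hj1, hj2, ?_⟩
      have hco : Nat.Coprime m1 s := ((hs.coprime_iff_not_dvd).mpr hsm1).symm
      refine (aux_key s m1 p n N j hco hN).mpr ?_
      rw [hNval]
      exact hjd
  · -- backward direction
    rintro ⟨hb, hc, hd⟩
    -- facts from (b)
    have hbN : ∀ r : ℕ, r.Prime → r ∣ m2 →
        r ^ m2.factorization r ∣ N ∧ ¬ r ^ (m2.factorization r + 1) ∣ N := by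
      intro r hr hrm2
      haveI : NeZero (r ^ (m2.factorization r + 1)) := ⟨pow_ne_zero _ hr.pos.ne'⟩
      have hrm1 : ¬ r ∣ m1 := by
        intro hd
        have : r ∣ 1 := h12 ▸ Nat.dvd_gcd hd hrm2
        exact hr.one_lt.ne' (Nat.dvd_one.mp this)
      have hco : Nat.Coprime m1 (r ^ (m2.factorization r + 1)) :=
        ((hr.coprime_iff_not_dvd).mpr hrm1).symm.pow_right _
      obtain ⟨j, hj1, hj2, hzm⟩ := hb r hr hrm2
      have hcast : ((j * r ^ m2.factorization r : ℕ) : ZMod (r ^ (m2.factorization r + 1))) =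
          (j : ZMod (r ^ (m2.factorization r + 1))) *
            (r : ZMod (r ^ (m2.factorization r + 1))) ^ (m2.factorization r) := by
        push_cast; ring
      rw [← hcast] at hzm
      have hdvd : r ^ (m2.factorization r + 1) ∣ N + m1 * (j * r ^ m2.factorization r) :=
        (aux_key _ m1 p n N _ hco hN).mp hzm
      constructor
      · have h1 : r ^ m2.factorization r ∣ N + m1 * (j * r ^ m2.factorization r) :=
          dvd_trans (pow_dvd_pow r (Nat.le_succ _)) hdvd
        have h2 : r ^ m2.factorization r ∣ m1 * (j * r ^ m2.factorization r) :=
          ⟨m1 * j, by ring⟩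
        simpa using Nat.dvd_sub h1 h2
      · intro hcon
        have h3 : r ^ (m2.factorization r + 1) ∣ m1 * (j * r ^ m2.factorization r) :=
          (Nat.dvd_add_right hcon).mp hdvd
        rw [show m1 * (j * r ^ m2.factorization r) = r ^ m2.factorization r * (m1 * j) from
          by ring, pow_succ] at h3
        have h4 : r ∣ m1 * j :=
          (Nat.mul_dvd_mul_iff_left (pow_pos hr.pos (m2.factorization r))).mp h3
        rcases (hr.dvd_mul).mp h4 with h' | h'
        · exact hrm1 h'
        · have := Nat.le_of_dvd (by omega) h'
          omega
    -- facts from (c)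
    have hqN : q ∣ N ∧ ¬ q ^ 2 ∣ N := by
      obtain ⟨l, hl1, hl2, hzm⟩ := hc
      have hcast : ((l * q : ℕ) : ZMod (q ^ 2)) =
          (l : ZMod (q ^ 2)) * (q : ZMod (q ^ 2)) := by push_cast; ring
      rw [← hcast] at hzm
      have hdvd : q ^ 2 ∣ N + m1 * (l * q) := (aux_key _ m1 p n N _ hcoq hN).mp hzm
      constructor
      · have h1 : q ∣ N + m1 * (l * q) := dvd_trans (dvd_pow_self q (by norm_num)) hdvd
        have h2 : q ∣ m1 * (l * q) := ⟨m1 * l, by ring⟩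
        simpa using Nat.dvd_sub h1 h2
      · intro hcon
        have h3 : q ^ 2 ∣ m1 * (l * q) := (Nat.dvd_add_right hcon).mp hdvd
        rw [show m1 * (l * q) = q * (m1 * l) from by ring, pow_two] at h3
        have h4 : q ∣ m1 * l := (Nat.mul_dvd_mul_iff_left hq.pos).mp h3
        rcases (hq.dvd_mul).mp h4 with h' | h'
        · exact hqm1 h'
        · have := Nat.le_of_dvd (by omega) h'
          omega
    -- facts from (d)
    have hdN : ∀ s : ℕ, s.Prime → s < K → s ≠ q → ¬ s ∣ m1 → ¬ s ∣ m2 → ¬ s ∣ N := by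
      intro s hs hsK hsq hsm1 hsm2 hcon
      haveI : NeZero s := ⟨hs.pos.ne'⟩
      obtain ⟨j, hj1, hj2, hzm⟩ := hd s hs hsK hsq hsm1 hsm2
      have hco : Nat.Coprime m1 s := ((hs.coprime_iff_not_dvd).mpr hsm1).symm
      have hdvd : s ∣ N + m1 * j := (aux_key s m1 p n N j hco hN).mp hzm
      have h4 : s ∣ m1 * j := (Nat.dvd_add_right hcon).mp hdvd
      rcases (hs.dvd_mul).mp h4 with h' | h'
      · exact hsm1 h'
      · have := Nat.le_of_dvd (by omega) h'
        omega
    -- m2 ∣ N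
    have hm2N : m2 ∣ N := by
      rw [← Nat.factorization_le_iff_dvd hm2.ne' hN0.ne']
      rw [Finsupp.le_def]
      intro r
      by_cases hr : r.Prime
      · by_cases hrm2 : r ∣ m2
        · exact (Nat.Prime.pow_dvd_iff_le_factorization hr hN0.ne').mp (hbN r hr hrm2).1
        · simp [Nat.factorization_eq_zero_of_not_dvd hrm2]
      · simp [Nat.factorization_eq_zero_of_not_prime _ hr]
    obtain ⟨M, hM⟩ := hm2N
    have hM0 : M ≠ 0 := by
      rintro rfl
      simp at hM
      omega
    have hMK : M ≤ K := by
      have h1 : m2 * M ≤ m2 * K := by rw [← hM]; omega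
      exact Nat.le_of_mul_le_mul_left h1 hm2
    have hqM : q ∣ M := ((hq.dvd_mul).mp (hM ▸ hqN.1)).resolve_left hqm2
    have hMprime : ∀ s : ℕ, s.Prime → s ∣ M → s = q := by
      intro s hs hsM
      by_contra hsq
      have hsN : s ∣ N := hM ▸ hsM.mul_left m2
      have hsm2 : ¬ s ∣ m2 := by
        intro hsm2
        have : s ^ (m2.factorization s + 1) ∣ N := by
          rw [hM, pow_succ]
          exact Nat.mul_dvd_mul (Nat.ordProj_dvd m2 s) hsM
        exact (hbN s hs hsm2).2 this
      have hsm1 : ¬ s ∣ m1 := by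
        intro hsm1
        have hsn : s ∣ n := hN ▸ Nat.dvd_add (hsm1.mul_right p) hsN
        have : s ∣ 1 := hn1 ▸ Nat.dvd_gcd hsn hsm1
        exact hs.one_lt.ne' (Nat.dvd_one.mp this)
      rcases lt_or_ge s K with hsK | hKs
      · exact hdN s hs hsK hsq hsm1 hsm2 hsN
      · have hqs : q ≠ s := fun h => hsq h.symm
        have hco : Nat.Coprime q s := (Nat.coprime_primes hq hs).mpr hqs
        have hqsM : q * s ∣ M := hco.mul_dvd_of_dvd_of_dvd hqM hsM
        have h1 : q * s ≤ M := Nat.le_of_dvd (Nat.pos_of_ne_zero hM0) hqsM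
        have h2 : 2 ≤ q := hq.two_le
        nlinarith
    obtain ⟨M', hM'⟩ := hqM
    have hM'1 : M' = 1 := by
      by_contra h
      obtain ⟨s, hs, hsM'⟩ := Nat.exists_prime_and_dvd h
      have hsM : s ∣ M := hM' ▸ hsM'.mul_left q
      have hseq : s = q := hMprime s hs hsM
      subst hseq
      have : s ^ 2 ∣ N := by
        rw [hM, hM', pow_two]
        exact (mul_dvd_mul_left s hsM').trans (dvd_mul_left _ _)
      exact hqN.2 this
    have hNval : N = m2 * q := by rw [hM, hM', hM'1, mul_one]
    rw [← hN, hNval]
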